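/- Let X be a completely regular Hausdorff space which is a μ-space (every functionally bounded subset of X has compact closure) and a k-space (a subset of X is closed whenever its intersection with every compact subset K of X is closed in K; for example, X metrizable). Then C_k(X), the space C(X,ℝ) of continuous real-valued functions with the compact-open topology, is weakly Ascoli if and only if X is discrete. -/

import Mathlib

open Set Topology

/-- A topological space `Y` is Ascoli if every compact subset of `C(Y,ℝ)` (with the
compact-open topology) is equicontinuous. -/
def IsAscoli (Y : Type*) [TopologicalSpace Y] : Prop :=
  ∀ K : Set C(Y, ℝ), IsCompact K → Equicontinuous fun f : K => ((f : C(Y, ℝ)) : Y → ℝ)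

/-- A subset `A` of a topological space `Y` is functionally bounded if every continuous
real-valued function on `Y` is bounded on `A`. -/
def FunctionallyBounded {Y : Type*} [TopologicalSpace Y] (A : Set Y) : Prop :=
  ∀ f : C(Y, ℝ), Bornology.IsBounded (f '' A)

open Filter

section AuxLemmas

lemma isAscoli_pi (ι : Type*) : IsAscoli (ι → ℝ) := by
  classical
  intro Q hQ x₀
  rw [Metric.equicontinuousAt_iff_right]
  by_contra hcon
  push_neg at hcon
  obtain ⟨ε, hε, hfreq⟩ := hcon
  have hwit : ∀ V ∈ 𝓝 x₀, ∃ y ∈ V, ∃ f : Q, ε ≤ dist ((f : C(ι → ℝ, ℝ)) x₀) ((f : C(ι → ℝ, ℝ)) y) := by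
    intro V hV
    obtain ⟨y, hyV, hny⟩ := Filter.frequently_iff.mp hfreq hV
    obtain ⟨f, hf⟩ := hny
    exact ⟨y, hyV, f, hf⟩
  -- the recursive step
  have step : ∀ (F : Finset ι) (n : ℕ), ∃ p : (ι → ℝ) × Finset ι × C(ι → ℝ, ℝ),
      p.2.2 ∈ Q ∧ ε / 2 ≤ dist (p.2.2 x₀) (p.2.2 p.1) ∧ (∀ i ∉ p.2.1, p.1 i = x₀ i) ∧
      (∀ i ∈ F, dist (p.1 i) (x₀ i) < 1 / (n + 1)) := by
    intro F n
    have hpos : (0 : ℝ) < 1 / (n + 1) := by positivity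
    have hV : {y : ι → ℝ | ∀ i ∈ F, dist (y i) (x₀ i) < 1 / (n + 1)} ∈ 𝓝 x₀ := by
      have : ((F : Set ι).pi fun i => Metric.ball (x₀ i) (1 / (n + 1))) ∈ 𝓝 x₀ :=
        set_pi_mem_nhds (F : Set ι).toFinite fun i _ => Metric.ball_mem_nhds _ hpos
      refine Filter.mem_of_superset this fun y hy i hi => ?_
      exact hy i hi
    obtain ⟨y, hyV, f, hfd⟩ := hwit _ hV
    have hb : {z : ι → ℝ | dist ((f : C(ι → ℝ, ℝ)) z) ((f : C(ι → ℝ, ℝ)) y) < ε / 2} ∈ 𝓝 y := by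
      have := (f : C(ι → ℝ, ℝ)).continuous.continuousAt (x := y)
      exact this (Metric.ball_mem_nhds _ (by positivity))
    obtain ⟨G, hG⟩ := exists_finset_piecewise_mem_of_mem_nhds hb x₀
    refine ⟨⟨G.piecewise y x₀, G, f⟩, f.2, ?_, ?_, ?_⟩
    · have h1 : dist ((f : C(ι → ℝ, ℝ)) (G.piecewise y x₀)) ((f : C(ι → ℝ, ℝ)) y) < ε / 2 := hG
      have h2 := dist_triangle ((f : C(ι → ℝ, ℝ)) x₀) ((f : C(ι → ℝ, ℝ)) (G.piecewise y x₀))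
        ((f : C(ι → ℝ, ℝ)) y)
      have h3 : dist ((f : C(ι → ℝ, ℝ)) (G.piecewise y x₀)) ((f : C(ι → ℝ, ℝ)) y)
          = dist ((f : C(ι → ℝ, ℝ)) y) ((f : C(ι → ℝ, ℝ)) (G.piecewise y x₀)) := dist_comm _ _
      linarith [hfd]
    · intro i hi
      simp [Finset.piecewise_eq_of_notMem _ _ _ hi]
    · intro i hi
      by_cases hiG : i ∈ G
      · simpa [Finset.piecewise_eq_of_mem _ _ _ hiG] using hyV i hi
      · simpa [Finset.piecewise_eq_of_notMem _ _ _ hiG] using hpos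
  choose p hpQ hpd hps hpF using step
  set F : ℕ → Finset ι := fun n => Nat.rec ∅ (fun n Fn => Fn ∪ (p Fn n).2.1) n with hF
  have hFsucc : ∀ n, F (n + 1) = F n ∪ (p (F n) n).2.1 := fun n => rfl
  have hFmono : Monotone F := by
    apply monotone_nat_of_le_succ
    intro n
    rw [hFsucc]
    exact Finset.subset_union_left
  set z : ℕ → ι → ℝ := fun n => (p (F n) n).1 with hz
  set f : ℕ → C(ι → ℝ, ℝ) := fun n => (p (F n) n).2.2 with hf
  -- z n → x₀
  have htend : Tendsto z atTop (𝓝 x₀) := by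
    rw [tendsto_pi_nhds]
    intro i
    by_cases hmem : ∃ m, i ∈ F m
    · obtain ⟨m, hm⟩ := hmem
      have hdist : ∀ n, m ≤ n → dist (z n i) (x₀ i) < 1 / (n + 1) := fun n hn =>
        hpF (F n) n i (hFmono hn hm)
      rw [tendsto_iff_dist_tendsto_zero]
      apply squeeze_zero' (Filter.Eventually.of_forall fun n => dist_nonneg)
        (Filter.eventually_atTop.mpr ⟨m, fun n hn => (hdist n hn).le⟩)
      exact tendsto_one_div_add_atTop_nhds_zero_nat
    · push_neg at hmem
      have : ∀ n, z n i = x₀ i := by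
        intro n
        by_contra hne
        have : i ∈ (p (F n) n).2.1 := by
          by_contra hni
          exact hne (hps (F n) n i hni)
        exact hmem (n + 1) (by rw [hFsucc]; exact Finset.mem_union_right _ this)
      have hfun : (fun n => z n i) = fun _ => x₀ i := funext this
      rw [hfun]
      exact tendsto_const_nhds
  have hD : IsCompact (insert x₀ (Set.range z)) := htend.isCompact_insert_range
  set D : Set (ι → ℝ) := insert x₀ (Set.range z) with hDdef
  haveI : CompactSpace ↥D := isCompact_iff_compactSpace.mp hD
  -- restriction to D
  have hres : Continuous fun g : C(ι → ℝ, ℝ) => g.restrict D := ContinuousMap.continuous_restrict D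
  have hQD : IsCompact ((fun g : C(ι → ℝ, ℝ) => g.restrict D) '' Q) := hQ.image hres
  have hmem : ∀ n, (f n).restrict D ∈ (fun g : C(ι → ℝ, ℝ) => g.restrict D) '' Q :=
    fun n => Set.mem_image_of_mem _ (hpQ (F n) n)
  obtain ⟨g, hgmem, φ, hφmono, hφtend⟩ := hQD.tendsto_subseq hmem
  -- points of D
  have hzD : ∀ n, z n ∈ D := fun n => Set.mem_insert_of_mem _ (Set.mem_range_self n)
  have hx₀D : x₀ ∈ D := Set.mem_insert _ _
  set dk : ℕ → ↥D := fun n => ⟨z n, hzD n⟩ with hdk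
  have hdktend : Tendsto (fun k => dk (φ k)) atTop (𝓝 ⟨x₀, hx₀D⟩) := by
    rw [tendsto_subtype_rng]
    exact htend.comp hφmono.tendsto_atTop
  have hgd : Tendsto (fun k => dist (g ⟨x₀, hx₀D⟩) (g (dk (φ k)))) atTop (𝓝 0) := by
    have h1 := ((g.continuous.tendsto _).comp hdktend)
    have h2 := Tendsto.dist ((tendsto_const_nhds : Tendsto (fun _ : ℕ => g ⟨x₀, hx₀D⟩) atTop (𝓝 (g ⟨x₀, hx₀D⟩)))) h1
    simpa using h2
  have hunif : Tendsto (fun k => dist ((f (φ k)).restrict D) g) atTop (𝓝 0) := by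
    rw [← tendsto_iff_dist_tendsto_zero]
    exact hφtend
  have hcontr : Tendsto (fun k => dist ((f (φ k)) x₀) ((f (φ k)) (z (φ k)))) atTop (𝓝 0) := by
    have hle : ∀ k, dist ((f (φ k)) x₀) ((f (φ k)) (z (φ k))) ≤
        2 * dist ((f (φ k)).restrict D) g + dist (g ⟨x₀, hx₀D⟩) (g (dk (φ k))) := by
      intro k
      have e1 : (f (φ k)) x₀ = ((f (φ k)).restrict D) ⟨x₀, hx₀D⟩ := rfl
      have e2 : (f (φ k)) (z (φ k)) = ((f (φ k)).restrict D) (dk (φ k)) := rfl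
      rw [e1, e2]
      have t1 := dist_triangle (((f (φ k)).restrict D) ⟨x₀, hx₀D⟩) (g ⟨x₀, hx₀D⟩)
        (((f (φ k)).restrict D) (dk (φ k)))
      have t2 := dist_triangle (g ⟨x₀, hx₀D⟩) (g (dk (φ k))) (((f (φ k)).restrict D) (dk (φ k)))
      have b1 : dist (((f (φ k)).restrict D) ⟨x₀, hx₀D⟩) (g ⟨x₀, hx₀D⟩) ≤
          dist ((f (φ k)).restrict D) g := ContinuousMap.dist_apply_le_dist _
      have b2 : dist (g (dk (φ k))) (((f (φ k)).restrict D) (dk (φ k))) ≤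
          dist ((f (φ k)).restrict D) g := by
        rw [dist_comm]; exact ContinuousMap.dist_apply_le_dist _
      linarith
    have h2 : Tendsto (fun k => 2 * dist ((f (φ k)).restrict D) g +
        dist (g ⟨x₀, hx₀D⟩) (g (dk (φ k)))) atTop (𝓝 0) := by
      have := (hunif.const_mul 2).add hgd
      simpa using this
    exact squeeze_zero (fun k => dist_nonneg) hle h2
  have hge : ∀ k, ε / 2 ≤ dist ((f (φ k)) x₀) ((f (φ k)) (z (φ k))) := fun k => hpd (F (φ k)) (φ k)
  have : ε / 2 ≤ 0 := ge_of_tendsto hcontr (Filter.Eventually.of_forall hge)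
  linarith

lemma IsAscoli.of_homeomorph {A B : Type*} [TopologicalSpace A] [TopologicalSpace B]
    (e : A ≃ₜ B) (hB : IsAscoli B) : IsAscoli A := by
  intro K hK
  have hcont : Continuous fun g : C(A, ℝ) => g.comp (e.symm : C(B, A)) :=
    ContinuousMap.continuous_precomp _
  have hK' : IsCompact ((fun g : C(A, ℝ) => g.comp (e.symm : C(B, A))) '' K) := hK.image hcont
  have heq := hB _ hK'
  intro a U hU
  have h1 := heq (e a) U hU
  have h2 : e ⁻¹' {y | ∀ g : ((fun g : C(A, ℝ) => g.comp (e.symm : C(B, A))) '' K),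
      ((g : C(B, ℝ)) (e a), (g : C(B, ℝ)) y) ∈ U} ∈ 𝓝 a :=
    e.continuous.continuousAt.preimage_mem_nhds h1
  refine Filter.mem_of_superset h2 fun y hy => ?_
  intro g
  have := hy ⟨(g : C(A, ℝ)).comp (e.symm : C(B, A)), Set.mem_image_of_mem _ g.2⟩
  simpa [ContinuousMap.comp_apply] using this

section Discrete

variable (X : Type*) [TopologicalSpace X] [DiscreteTopology X]

noncomputable def evalCLM' {Z : Type*} [TopologicalSpace Z] (x : Z) : C(Z, ℝ) →L[ℝ] ℝ where
  toFun f := f x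
  map_add' _ _ := rfl
  map_smul' _ _ := rfl
  cont := continuous_eval_const x

lemma continuous_uncurry_discrete : Continuous (Function.uncurry fun (g : X → ℝ) (x : X) => g x) := by
  rw [continuous_iff_continuousAt]
  rintro ⟨g, x⟩
  unfold ContinuousAt
  rw [nhds_prod_eq, nhds_discrete X, Filter.prod_pure, Filter.tendsto_map'_iff]
  exact (continuous_apply x).tendsto g

lemma continuous_mk_discrete :
    Continuous fun g : X → ℝ => (⟨g, continuous_of_discreteTopology⟩ : C(X, ℝ)) :=
  ContinuousMap.continuous_of_continuous_uncurry _ (continuous_uncurry_discrete X)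

noncomputable def weakSpaceHomeoPi : WeakSpace ℝ C(X, ℝ) ≃ₜ (X → ℝ) where
  toFun f := ((toWeakSpace ℝ C(X, ℝ)).symm f : C(X, ℝ))
  invFun g := toWeakSpace ℝ C(X, ℝ) ⟨g, continuous_of_discreteTopology⟩
  left_inv f := rfl
  right_inv g := rfl
  continuous_toFun := by
    apply continuous_pi
    intro x
    exact WeakBilin.eval_continuous ((topDualPairing ℝ C(X, ℝ)).flip) (evalCLM' x)
  continuous_invFun := by
    apply WeakBilin.continuous_of_continuous_eval
    intro φ
    exact φ.continuous.comp (continuous_mk_discrete X)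

end Discrete



lemma forward_finite {X : Type*} [TopologicalSpace X] [CompletelyRegularSpace X] [T2Space X]
    (hA : IsAscoli (WeakSpace ℝ C(X, ℝ))) {K : Set X} (hK : IsCompact K) : K.Finite := by
  classical
  by_contra hinf
  have hinf' : K.Infinite := hinf
  let emb := Set.Infinite.natEmbedding K hinf'
  let x : ℕ → X := fun n => (emb n : X)
  have hxK : ∀ n, x n ∈ K := fun n => (emb n).2
  have hxinj : Function.Injective x := fun a b h => emb.injective (Subtype.ext h)
  haveI : CompactSpace ↥K := isCompact_iff_compactSpace.mp hK
  -- the restriction operator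
  let R : C(X, ℝ) →L[ℝ] C(↥K, ℝ) :=
    { toFun := fun f => f.restrict K
      map_add' := fun f g => ContinuousMap.ext fun _ => rfl
      map_smul' := fun c f => ContinuousMap.ext fun _ => rfl
      cont := ContinuousMap.continuous_restrict K }
  -- the test functions
  let Φ : ℕ → C(WeakSpace ℝ C(X, ℝ), ℝ) := fun n =>
    ⟨fun f => (2⁻¹ : ℝ) ^ n * (topDualPairing ℝ C(X, ℝ)).flip f (evalCLM' (x n)),
     continuous_const.mul (WeakBilin.eval_continuous _ (evalCLM' (x n)))⟩
  -- weakly compact sets are uniformly bounded on K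
  have hbound : ∀ Q : Set (WeakSpace ℝ C(X, ℝ)), IsCompact Q → ∃ C : ℝ, 0 ≤ C ∧
      ∀ f ∈ Q, ‖R f‖ ≤ C := by
    intro Q hQ
    have hpt : ∀ ψ : StrongDual ℝ C(↥K, ℝ), ∃ C, ∀ f : Q,
        ‖NormedSpace.inclusionInDoubleDual ℝ C(↥K, ℝ) (R (f : WeakSpace ℝ C(X, ℝ))) ψ‖ ≤ C := by
      intro ψ
      have hcont : Continuous fun f : WeakSpace ℝ C(X, ℝ) =>
          (topDualPairing ℝ C(X, ℝ)).flip f (ψ.comp R) :=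
        WeakBilin.eval_continuous _ _
      have himg : IsCompact ((fun f : WeakSpace ℝ C(X, ℝ) =>
          (topDualPairing ℝ C(X, ℝ)).flip f (ψ.comp R)) '' Q) := hQ.image hcont
      obtain ⟨C, hC⟩ := isBounded_iff_forall_norm_le.mp himg.isBounded
      refine ⟨C, fun f => ?_⟩
      have h1 := hC _ (Set.mem_image_of_mem _ f.2)
      have h2 : (topDualPairing ℝ C(X, ℝ)).flip (f : WeakSpace ℝ C(X, ℝ)) (ψ.comp R)
          = NormedSpace.inclusionInDoubleDual ℝ C(↥K, ℝ) (R (f : WeakSpace ℝ C(X, ℝ))) ψ := rfl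
      rwa [h2] at h1
    obtain ⟨C', hC'⟩ := banach_steinhaus hpt
    refine ⟨max C' 0, le_max_right _ _, fun f hf => ?_⟩
    have h1 : ‖NormedSpace.inclusionInDoubleDual ℝ C(↥K, ℝ) (R f)‖ ≤ C' := hC' ⟨f, hf⟩
    have h2 : ‖NormedSpace.inclusionInDoubleDual ℝ C(↥K, ℝ) (R f)‖ = ‖R f‖ :=
      (NormedSpace.inclusionInDoubleDualLi ℝ (E := C(↥K, ℝ))).norm_map _
    rw [h2] at h1
    exact le_trans h1 (le_max_left _ _)
  -- Φ n → 0 in C(W, ℝ)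
  have hΦtend : Tendsto Φ atTop (𝓝 0) := by
    rw [ContinuousMap.tendsto_iff_forall_isCompact_tendstoUniformlyOn]
    intro Q hQ
    obtain ⟨C, hC0, hC⟩ := hbound Q hQ
    rw [Metric.tendstoUniformlyOn_iff]
    intro ε hε
    have hpow : Tendsto (fun n : ℕ => (2⁻¹ : ℝ) ^ n) atTop (𝓝 0) :=
      tendsto_pow_atTop_nhds_zero_of_lt_one (by norm_num) (by norm_num)
    have hlt : Tendsto (fun n : ℕ => (2⁻¹ : ℝ) ^ n * C) atTop (𝓝 0) := by
      simpa using hpow.mul_const C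
    filter_upwards [hlt.eventually (gt_mem_nhds hε)] with n hn f hf
    have hb : ‖(topDualPairing ℝ C(X, ℝ)).flip f (evalCLM' (x n))‖ ≤ C := by
      have h1 : (topDualPairing ℝ C(X, ℝ)).flip f (evalCLM' (x n))
          = (R f) ⟨x n, hxK n⟩ := rfl
      rw [h1]
      exact le_trans (ContinuousMap.norm_coe_le_norm (R f) _) (hC f hf)
    rw [Real.norm_eq_abs] at hb
    have h3 : dist ((0 : C(WeakSpace ℝ C(X, ℝ), ℝ)) f) (Φ n f)
        = (2⁻¹ : ℝ) ^ n * |(topDualPairing ℝ C(X, ℝ)).flip f (evalCLM' (x n))| := by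
      show dist (0 : ℝ) ((2⁻¹ : ℝ) ^ n * (topDualPairing ℝ C(X, ℝ)).flip f (evalCLM' (x n))) = _
      rw [Real.dist_eq, zero_sub, abs_neg, abs_mul, abs_pow,
        abs_of_pos (by norm_num : (0:ℝ) < 2⁻¹)]
    rw [h3]
    calc (2⁻¹ : ℝ) ^ n * |(topDualPairing ℝ C(X, ℝ)).flip f (evalCLM' (x n))|
        ≤ (2⁻¹ : ℝ) ^ n * C := by
          apply mul_le_mul_of_nonneg_left hb (by positivity)
      _ < ε := hn
  -- the compact set in C(W, ℝ)
  have hS : IsCompact (insert (0 : C(WeakSpace ℝ C(X, ℝ), ℝ)) (Set.range Φ)) :=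
    hΦtend.isCompact_insert_range
  have hEq := hA _ hS
  have h0 := hEq 0 _ (Metric.dist_mem_uniformity one_pos)
  set VV : Set (WeakSpace ℝ C(X, ℝ)) :=
    {g | ∀ i : ↥(insert (0 : C(WeakSpace ℝ C(X, ℝ), ℝ)) (Set.range Φ)),
      ((i : C(WeakSpace ℝ C(X, ℝ), ℝ)) (0 : WeakSpace ℝ C(X, ℝ)),
       (i : C(WeakSpace ℝ C(X, ℝ), ℝ)) g) ∈ {p : ℝ × ℝ | dist p.1 p.2 < 1}} with hVVdef
  have hVV : VV ∈ 𝓝 (0 : WeakSpace ℝ C(X, ℝ)) := h0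
  have hind : IsInducing (fun (f : WeakSpace ℝ C(X, ℝ)) (φ : C(X, ℝ) →L[ℝ] ℝ) =>
      (topDualPairing ℝ C(X, ℝ)).flip f φ) := ⟨rfl⟩
  rw [hind.nhds_eq_comap, Filter.mem_comap] at hVV
  obtain ⟨V', hV', hsub⟩ := hVV
  rw [nhds_pi] at hV'
  obtain ⟨I, t, ht, htsub⟩ := Filter.mem_pi'.mp hV'
  -- key vanishing property
  have hkey : ∀ g : C(X, ℝ), (∀ φ ∈ I, φ g = 0) → ∀ n, g (x n) = 0 := by
    intro g hg n
    by_contra hne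
    set a := g (x n) with ha
    set c := (2⁻¹ : ℝ) ^ n with hc
    have hcne : c ≠ 0 := by positivity
    set tt : ℝ := 2 / (c * a)
    have hmem : (tt • g : WeakSpace ℝ C(X, ℝ)) ∈ VV := by
      apply hsub
      apply Set.mem_preimage.mpr
      apply htsub
      rw [Set.mem_pi]
      intro φ hφ
      have he : (topDualPairing ℝ C(X, ℝ)).flip (tt • g : WeakSpace ℝ C(X, ℝ)) φ
          = (topDualPairing ℝ C(X, ℝ)).flip (0 : WeakSpace ℝ C(X, ℝ)) φ := by
        show φ (tt • g) = φ (0 : C(X, ℝ))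
        rw [map_smul, map_zero, hg φ (Finset.mem_coe.mp hφ)]
        simp
      show (topDualPairing ℝ C(X, ℝ)).flip (tt • g : WeakSpace ℝ C(X, ℝ)) φ ∈ t φ
      rw [he]
      exact mem_of_mem_nhds (ht φ)
    have hΦmem := hmem ⟨Φ n, Set.mem_insert_of_mem _ ⟨n, rfl⟩⟩
    have he0 : (Φ n) (0 : WeakSpace ℝ C(X, ℝ)) = 0 := by
      show c * (evalCLM' (x n)) (0 : C(X, ℝ)) = 0
      simp
    have he1 : (Φ n) (tt • g : WeakSpace ℝ C(X, ℝ)) = 2 := by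
      show c * (evalCLM' (x n)) (tt • g) = 2
      have : (evalCLM' (x n)) (tt • g) = tt * a := by
        show (tt • g) (x n) = tt * a
        rw [ContinuousMap.smul_apply, smul_eq_mul, ha]
      rw [this]
      show c * (2 / (c * a) * a) = 2
      field_simp
    rw [Set.mem_setOf_eq, he0, he1] at hΦmem
    norm_num [Real.dist_eq] at hΦmem
  -- bump functions
  set m := I.card with hm
  have bump : ∀ j : Fin (m + 1), ∃ g : C(X, ℝ),
      ∀ i : Fin (m + 1), g (x i) = if i = j then 1 else 0 := by
    intro j
    have hfin : (x '' {i : ℕ | i < m + 1 ∧ i ≠ (j : ℕ)}).Finite :=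
      Set.Finite.image _ ((Set.finite_Iio (m + 1)).subset fun i hi => hi.1)
    have hcl : IsClosed (x '' {i : ℕ | i < m + 1 ∧ i ≠ (j : ℕ)}) := hfin.isClosed
    have hnm : x j ∉ x '' {i : ℕ | i < m + 1 ∧ i ≠ (j : ℕ)} := by
      rintro ⟨i, ⟨-, hne⟩, heq⟩
      exact hne (hxinj heq)
    obtain ⟨f, hfc, hf0, hf1⟩ := CompletelyRegularSpace.completely_regular (x j) _ hcl hnm
    refine ⟨⟨fun y => 1 - (f y : ℝ), continuous_const.sub (continuous_subtype_val.comp hfc)⟩, ?_⟩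
    intro i
    by_cases hij : i = j
    · subst hij
      simp [hf0]
    · have hmem : x i ∈ x '' {i : ℕ | i < m + 1 ∧ i ≠ (j : ℕ)} :=
        ⟨i, ⟨i.isLt, fun h => hij (Fin.ext h)⟩, rfl⟩
      have := hf1 hmem
      simp only [ContinuousMap.coe_mk, this]
      simp [hij]
  choose gb hgb using bump
  -- a nonzero kernel element
  let T : (Fin (m + 1) → ℝ) →ₗ[ℝ] (↥I → ℝ) :=
    { toFun := fun c φ => (φ : C(X, ℝ) →L[ℝ] ℝ) (∑ j, c j • gb j)
      map_add' := fun c d => by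
        funext φ
        simp [add_smul, Finset.sum_add_distrib]
      map_smul' := fun r c => by
        funext φ
        simp [smul_smul, Finset.mul_sum, mul_assoc] }
  have hnotinj : ¬ Function.Injective T := by
    intro hinj
    have h1 := LinearMap.finrank_le_finrank_of_injective hinj
    rw [Module.finrank_pi, Module.finrank_pi] at h1
    simp [Fintype.card_coe, hm] at h1
  obtain ⟨c, hc0, hcker⟩ : ∃ c, c ≠ 0 ∧ T c = 0 := by
    by_contra h
    push_neg at h
    apply hnotinj
    rw [← LinearMap.ker_eq_bot, Submodule.eq_bot_iff]
    intro c hc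
    by_contra hne
    exact h c hne (LinearMap.mem_ker.mp hc)
  set g : C(X, ℝ) := ∑ j, c j • gb j with hgdef
  have hφg : ∀ φ ∈ I, φ g = 0 := by
    intro φ hφ
    have := congrFun hcker ⟨φ, hφ⟩
    exact this
  have heval : ∀ i : Fin (m + 1), g (x i) = c i := by
    intro i
    have h1 : g (x i) = ∑ j, c j * gb j (x i) := by
      simp [hgdef, Finset.sum_apply]
    rw [h1]
    have h2 : ∀ j : Fin (m + 1), c j * gb j (x i) = if i = j then c j else 0 := by
      intro j
      rw [hgb j i]
      by_cases hij : i = j <;> simp [hij]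
    rw [Finset.sum_congr rfl fun j _ => h2 j]
    simp
  have : c = 0 := by
    funext i
    rw [← heval i, hkey g hφg i]
    rfl
  exact hc0 this

end AuxLemmas

/-- Let `X` be a completely regular Hausdorff `μ`-space and `k`-space. Then `C_k(X)` (with the
compact-open topology) is weakly Ascoli if and only if `X` is discrete. -/
theorem statement13 {X : Type*} [TopologicalSpace X] [CompletelyRegularSpace X] [T2Space X]
    (hμ : ∀ A : Set X, FunctionallyBounded A → IsCompact (closure A))
    (hk : ∀ s : Set X,
      (∀ K : Set X, IsCompact K → IsClosed ((Subtype.val ⁻¹' s) : Set K)) → IsClosed s) :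
    IsAscoli (WeakSpace ℝ C(X, ℝ)) ↔ DiscreteTopology X := by
  constructor
  · intro hA
    have hclosed : ∀ s : Set X, IsClosed s := by
      intro s
      apply hk
      intro K hK
      haveI : Finite ↥K := (forward_finite hA hK).to_subtype
      exact isClosed_discrete _
    rw [discreteTopology_iff_forall_isClosed]
    exact hclosed
  · intro hX
    exact IsAscoli.of_homeomorph (weakSpaceHomeoPi X) (isAscoli_pi X)
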